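/- arXiv:2506.14479 — 2 statements merged into one kernel-verified Lean document; each statement's English description precedes it below -/
import Mathlib

section
/- Let A and V be real symmetric matrices with V positive definite and A positive semidefinite, and suppose V^{-1/2}(A + I_d)V^{-1/2} ⪰ (1/4) I_d and λ_min(V) ≥ 4. Then the spectral norm of P := V^{-1/2}(V - A)(A + I_d)^{-1} V^{1/2} satisfies ‖P‖₂ ≤ 5. -/
open Matrix


/-- The square root of a positive semidefinite matrix, as defined in the older Mathlib
(removed since). -/
noncomputable def Matrix.PosSemidef.sqrt {n 𝕜 : Type*} [Fintype n] [RCLike 𝕜] [PartialOrder 𝕜]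
    [StarOrderedRing 𝕜] [DecidableEq n]
    {A : Matrix n n 𝕜} (hA : A.PosSemidef) : Matrix n n 𝕜 :=
  hA.1.eigenvectorUnitary.1 * diagonal ((↑) ∘ (Real.sqrt ∘ hA.1.eigenvalues)) *
  (star hA.1.eigenvectorUnitary : Matrix n n 𝕜)

theorem Matrix.PosSemidef.sqrt_mul_self {d : ℕ} {A : Matrix (Fin d) (Fin d) ℝ}
    (hA : A.PosSemidef) : hA.sqrt * hA.sqrt = A := by
  have hU : (star hA.1.eigenvectorUnitary : Matrix (Fin d) (Fin d) ℝ) * hA.1.eigenvectorUnitary.1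
      = 1 := Unitary.star_mul_self_of_mem hA.1.eigenvectorUnitary.2
  have hD : diagonal ((↑) ∘ (Real.sqrt ∘ hA.1.eigenvalues)) *
      diagonal ((↑) ∘ (Real.sqrt ∘ hA.1.eigenvalues)) =
      diagonal (RCLike.ofReal ∘ hA.1.eigenvalues : Fin d → ℝ) := by
    rw [diagonal_mul_diagonal]
    congr 1
    funext i
    simp [Real.mul_self_sqrt (hA.eigenvalues_nonneg i)]
  conv_rhs => rw [hA.1.spectral_theorem]
  rw [Unitary.conjStarAlgAut_apply]
  simp only [Matrix.PosSemidef.sqrt]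
  calc _ = hA.1.eigenvectorUnitary.1 * (diagonal ((↑) ∘ (Real.sqrt ∘ hA.1.eigenvalues)) *
      ((star hA.1.eigenvectorUnitary : Matrix (Fin d) (Fin d) ℝ) * hA.1.eigenvectorUnitary.1) *
      diagonal ((↑) ∘ (Real.sqrt ∘ hA.1.eigenvalues))) *
      (star hA.1.eigenvectorUnitary : Matrix (Fin d) (Fin d) ℝ) := by simp only [mul_assoc]; rfl
    _ = _ := by rw [hU, mul_one, hD]

theorem Matrix.PosSemidef.posSemidef_sqrt {d : ℕ} {A : Matrix (Fin d) (Fin d) ℝ}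
    (hA : A.PosSemidef) : hA.sqrt.PosSemidef := by
  have hD : (diagonal ((↑) ∘ (Real.sqrt ∘ hA.1.eigenvalues)) :
      Matrix (Fin d) (Fin d) ℝ).PosSemidef :=
    posSemidef_diagonal_iff.mpr fun i => by simp [Real.sqrt_nonneg]
  have := hD.mul_mul_conjTranspose_same hA.1.eigenvectorUnitary.1
  exact this

variable {d : ℕ}

private lemma psd_smul {A : Matrix (Fin d) (Fin d) ℝ} (hA : A.PosSemidef) {c : ℝ} (hc : 0 ≤ c) :
    (c • A).PosSemidef := by
  refine Matrix.PosSemidef.of_dotProduct_mulVec_nonneg ?_ fun x => ?_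
  · unfold Matrix.IsHermitian
    rw [conjTranspose_smul, hA.1]
    simp
  · rw [smul_mulVec, dotProduct_smul]
    exact smul_nonneg hc (hA.dotProduct_mulVec_nonneg x)

private lemma pd_smul {A : Matrix (Fin d) (Fin d) ℝ} (hA : A.PosDef) {c : ℝ} (hc : 0 < c) :
    (c • A).PosDef := by
  refine Matrix.PosDef.of_dotProduct_mulVec_pos ?_ fun x hx => ?_
  · unfold Matrix.IsHermitian
    rw [conjTranspose_smul, hA.1]
    simp
  · rw [smul_mulVec, dotProduct_smul]
    exact smul_pos hc (hA.dotProduct_mulVec_pos hx)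

private lemma sqrt_dot_eq_norm (u : Fin d → ℝ) :
    Real.sqrt (u ⬝ᵥ u) = ‖(WithLp.equiv 2 (Fin d → ℝ)).symm u‖ := by
  rw [EuclideanSpace.norm_eq]
  congr 1
  refine Finset.sum_congr rfl fun i _ => ?_
  rw [Real.norm_eq_abs, sq_abs, sq]
  rfl

private lemma tri (u v : Fin d → ℝ) :
    Real.sqrt ((u + v) ⬝ᵥ (u + v)) ≤ Real.sqrt (u ⬝ᵥ u) + Real.sqrt (v ⬝ᵥ v) := by
  rw [sqrt_dot_eq_norm, sqrt_dot_eq_norm, sqrt_dot_eq_norm]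
  have : (WithLp.equiv 2 (Fin d → ℝ)).symm (u + v)
      = (WithLp.equiv 2 (Fin d → ℝ)).symm u + (WithLp.equiv 2 (Fin d → ℝ)).symm v := rfl
  rw [this]
  exact norm_add_le _ _

private lemma quad_bound {N : Matrix (Fin d) (Fin d) ℝ} {c : ℝ} (hc : 0 ≤ c)
    (h : (c ^ 2 • (1 : Matrix (Fin d) (Fin d) ℝ) - Nᵀ * N).PosSemidef) (x : Fin d → ℝ) :
    Real.sqrt ((N *ᵥ x) ⬝ᵥ (N *ᵥ x)) ≤ c * Real.sqrt (x ⬝ᵥ x) := by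
  have key : (N *ᵥ x) ⬝ᵥ (N *ᵥ x) ≤ c ^ 2 * (x ⬝ᵥ x) := by
    have h2 := h.dotProduct_mulVec_nonneg x
    simp only [star_trivial, sub_mulVec, dotProduct_sub, smul_mulVec, one_mulVec,
      dotProduct_smul, smul_eq_mul] at h2
    have : x ⬝ᵥ ((Nᵀ * N) *ᵥ x) = (N *ᵥ x) ⬝ᵥ (N *ᵥ x) := by
      rw [← mulVec_mulVec, dotProduct_mulVec, vecMul_transpose]
    linarith [h2, this]
  calc Real.sqrt ((N *ᵥ x) ⬝ᵥ (N *ᵥ x)) ≤ Real.sqrt (c ^ 2 * (x ⬝ᵥ x)) :=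
        Real.sqrt_le_sqrt key
    _ = c * Real.sqrt (x ⬝ᵥ x) := by
        rw [Real.sqrt_mul (sq_nonneg c), Real.sqrt_sq hc]

private lemma psd_sq {N : Matrix (Fin d) (Fin d) ℝ} (hN : N.PosSemidef) {c : ℝ} (hc : 0 ≤ c)
    (h : (c • (1 : Matrix (Fin d) (Fin d) ℝ) - N).PosSemidef) :
    (c ^ 2 • (1 : Matrix (Fin d) (Fin d) ℝ) - N * N).PosSemidef := by
  obtain ⟨R, hRpsd, hR⟩ : ∃ R : Matrix (Fin d) (Fin d) ℝ, R.PosSemidef ∧ R * R = N :=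
    ⟨hN.sqrt, hN.posSemidef_sqrt, hN.sqrt_mul_self⟩
  have hRH : Rᴴ = R := hRpsd.1
  have h1 : (R * (c • 1 - N) * Rᴴ).PosSemidef := h.mul_mul_conjTranspose_same R
  rw [hRH] at h1
  have e1 : R * (c • 1 - N) * R = c • N - N * N := by
    rw [mul_sub, sub_mul, Matrix.mul_smul, mul_one, Matrix.smul_mul, hR]
    congr 1
    calc R * N * R = R * (R * R) * R := by rw [hR]
      _ = (R * R) * (R * R) := by rw [mul_assoc, mul_assoc, mul_assoc]
      _ = N * N := by rw [hR]
  rw [e1] at h1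
  have h2 : (c • (c • (1 : Matrix (Fin d) (Fin d) ℝ) - N)).PosSemidef := psd_smul h hc
  have h3 := h2.add h1
  have e2 : c • (c • (1 : Matrix (Fin d) (Fin d) ℝ) - N) + (c • N - N * N)
      = c ^ 2 • (1 : Matrix (Fin d) (Fin d) ℝ) - N * N := by
    rw [smul_sub, smul_smul, ← pow_two]
    abel
  rwa [e2] at h3

private lemma psd_inv {B : Matrix (Fin d) (Fin d) ℝ} (hB : B.PosDef) {c : ℝ} (hc : 0 < c)
    (h : (B - c • (1 : Matrix (Fin d) (Fin d) ℝ)).PosSemidef) :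
    (c⁻¹ • (1 : Matrix (Fin d) (Fin d) ℝ) - B⁻¹).PosSemidef := by
  have hBinv : B⁻¹.PosDef := hB.inv
  obtain ⟨T, hTpsd, hT⟩ : ∃ T : Matrix (Fin d) (Fin d) ℝ, T.PosSemidef ∧ T * T = B⁻¹ :=
    ⟨hBinv.posSemidef.sqrt, hBinv.posSemidef.posSemidef_sqrt, hBinv.posSemidef.sqrt_mul_self⟩
  have hTH : Tᴴ = T := hTpsd.1
  have hTdet : IsUnit T.det := by
    have hmul : T.det * T.det = B⁻¹.det := by rw [← det_mul, hT]
    have hBd : IsUnit B⁻¹.det := (Matrix.isUnit_iff_isUnit_det _).mp hBinv.isUnit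
    refine isUnit_iff_ne_zero.mpr fun h0 => ?_
    rw [h0, mul_zero] at hmul
    exact (isUnit_iff_ne_zero.mp hBd) hmul.symm
  have hTBT : T * B * T = 1 := by
    have hBeq : B = (T * T)⁻¹ := by
      rw [hT, Matrix.nonsing_inv_nonsing_inv B ((Matrix.isUnit_iff_isUnit_det B).mp hB.isUnit)]
    rw [hBeq, Matrix.mul_inv_rev]
    calc T * (T⁻¹ * T⁻¹) * T = (T * T⁻¹) * (T⁻¹ * T) := by
          rw [mul_assoc, mul_assoc, mul_assoc]
      _ = 1 := by rw [Matrix.mul_nonsing_inv _ hTdet, Matrix.nonsing_inv_mul _ hTdet, one_mul]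
  have h1 : (T * (B - c • 1) * Tᴴ).PosSemidef := h.mul_mul_conjTranspose_same T
  rw [hTH] at h1
  have e1 : T * (B - c • 1) * T = 1 - c • B⁻¹ := by
    rw [mul_sub, sub_mul, hTBT, Matrix.mul_smul, mul_one, Matrix.smul_mul, hT]
  rw [e1] at h1
  have h2 := psd_smul h1 (le_of_lt (inv_pos.mpr hc))
  have e2 : c⁻¹ • ((1 : Matrix (Fin d) (Fin d) ℝ) - c • B⁻¹)
      = c⁻¹ • (1 : Matrix (Fin d) (Fin d) ℝ) - B⁻¹ := by
    rw [smul_sub, smul_smul, inv_mul_cancel₀ (ne_of_gt hc), one_smul]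
  rwa [e2] at h2

private lemma herm_transpose {X : Matrix (Fin d) (Fin d) ℝ} (hX : X.IsHermitian) : Xᵀ = X := by
  rw [← Matrix.conjTranspose_eq_transpose_of_trivial, hX.eq]

/-- Deterministic core of the `P_t` bound: if `V^{-1/2}(A + I)V^{-1/2} ⪰ (1/4)I` and
`λ_min(V) ≥ 4` (i.e. `V ⪰ 4 I`), then the spectral norm of
`P = V^{-1/2}(V - A)(A + I)⁻¹ V^{1/2}` is at most 5. -/
theorem stmt_7 (d : ℕ) (A V : Matrix (Fin d) (Fin d) ℝ)
    (hA : A.PosSemidef) (hV : V.PosDef)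
    (hlow : ((hV.posSemidef.sqrt)⁻¹ * (A + 1) * (hV.posSemidef.sqrt)⁻¹
        - (1/4 : ℝ) • (1 : Matrix (Fin d) (Fin d) ℝ)).PosSemidef)
    (hmin : (V - (4 : ℝ) • (1 : Matrix (Fin d) (Fin d) ℝ)).PosSemidef)
    (P : Matrix (Fin d) (Fin d) ℝ)
    (hP : P = (hV.posSemidef.sqrt)⁻¹ * (V - A) * (A + 1)⁻¹ * hV.posSemidef.sqrt) :
    ∀ x : Fin d → ℝ, Real.sqrt ((P *ᵥ x) ⬝ᵥ (P *ᵥ x)) ≤ 5 * Real.sqrt (x ⬝ᵥ x) := by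
  obtain ⟨S, hSpsd, hSS, hlow2, hP2⟩ :
      ∃ S : Matrix (Fin d) (Fin d) ℝ, S.PosSemidef ∧ S * S = V ∧
        (S⁻¹ * (A + 1) * S⁻¹ - (1/4 : ℝ) • (1 : Matrix (Fin d) (Fin d) ℝ)).PosSemidef ∧
        P = S⁻¹ * (V - A) * (A + 1)⁻¹ * S :=
    ⟨hV.posSemidef.sqrt, hV.posSemidef.posSemidef_sqrt, hV.posSemidef.sqrt_mul_self, hlow, hP⟩
  have hSH : Sᴴ = S := hSpsd.1
  have hA1 : (A + 1).PosDef := Matrix.PosDef.posSemidef_add hA Matrix.PosDef.one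
  have hSdet : IsUnit S.det := by
    have hmul : S.det * S.det = V.det := by rw [← det_mul, hSS]
    refine isUnit_iff_ne_zero.mpr fun h0 => ?_
    rw [h0, mul_zero] at hmul
    exact (ne_of_gt hV.det_pos) hmul.symm
  have hA1det : IsUnit (A + 1).det := (Matrix.isUnit_iff_isUnit_det _).mp hA1.isUnit
  -- the matrix M = S (A+1)⁻¹ S
  set M : Matrix (Fin d) (Fin d) ℝ := S * (A + 1)⁻¹ * S with hMdef
  have hMpsd : M.PosSemidef := by
    have := hA1.inv.posSemidef.mul_mul_conjTranspose_same S
    rwa [hSH] at this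
  -- B = S⁻¹ (A+1) S⁻¹ is PosDef and B⁻¹ = M
  have hBpd : (S⁻¹ * (A + 1) * S⁻¹).PosDef := by
    have h14 : ((1/4 : ℝ) • (1 : Matrix (Fin d) (Fin d) ℝ)).PosDef :=
      pd_smul Matrix.PosDef.one (by norm_num)
    have := Matrix.PosDef.posSemidef_add hlow2 h14
    rwa [sub_add_cancel] at this
  have hBinv : (S⁻¹ * (A + 1) * S⁻¹)⁻¹ = M := by
    rw [Matrix.mul_inv_rev, Matrix.mul_inv_rev,
      Matrix.nonsing_inv_nonsing_inv S hSdet, hMdef, mul_assoc]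
  have h4 : ((4 : ℝ) • (1 : Matrix (Fin d) (Fin d) ℝ) - M).PosSemidef := by
    have := psd_inv hBpd (c := (1/4 : ℝ)) (by norm_num) hlow2
    rw [hBinv] at this
    have e : ((1/4 : ℝ))⁻¹ = 4 := by norm_num
    rwa [e] at this
  have h16 : ((4 : ℝ) ^ 2 • (1 : Matrix (Fin d) (Fin d) ℝ) - M * M).PosSemidef :=
    psd_sq hMpsd (by norm_num) h4
  have hVinv4 : ((4 : ℝ)⁻¹ • (1 : Matrix (Fin d) (Fin d) ℝ) - V⁻¹).PosSemidef :=
    psd_inv hV (by norm_num) hmin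
  have h16inv : (((4 : ℝ)⁻¹) ^ 2 • (1 : Matrix (Fin d) (Fin d) ℝ) - V⁻¹ * V⁻¹).PosSemidef :=
    psd_sq hV.inv.posSemidef (by norm_num) hVinv4
  -- bound for (M - 1)
  have h9 : ((3 : ℝ) ^ 2 • (1 : Matrix (Fin d) (Fin d) ℝ) - (M - 1) * (M - 1)).PosSemidef := by
    obtain ⟨R, hRpsd, hR⟩ : ∃ R : Matrix (Fin d) (Fin d) ℝ, R.PosSemidef ∧ R * R = M :=
      ⟨hMpsd.sqrt, hMpsd.posSemidef_sqrt, hMpsd.sqrt_mul_self⟩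
    have hRH : Rᴴ = R := hRpsd.1
    have h1 : (R * ((4 : ℝ) • 1 - M) * Rᴴ).PosSemidef := h4.mul_mul_conjTranspose_same R
    rw [hRH] at h1
    have e1 : R * ((4 : ℝ) • 1 - M) * R = (4 : ℝ) • M - M * M := by
      rw [mul_sub, sub_mul, Matrix.mul_smul, mul_one, Matrix.smul_mul, hR]
      congr 1
      calc R * M * R = R * (R * R) * R := by rw [hR]
        _ = (R * R) * (R * R) := by rw [mul_assoc, mul_assoc, mul_assoc]
        _ = M * M := by rw [hR]
    rw [e1] at h1
    have h2 := h1.add (psd_smul h4 (by norm_num : (0:ℝ) ≤ 2))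
    have e2 : ((4 : ℝ) • M - M * M) + (2 : ℝ) • ((4 : ℝ) • (1 : Matrix (Fin d) (Fin d) ℝ) - M)
        = (3 : ℝ) ^ 2 • (1 : Matrix (Fin d) (Fin d) ℝ) - (M - 1) * (M - 1) := by
      have : (M - 1) * (M - 1) = M * M - M - M + 1 := by
        rw [sub_mul, mul_sub, mul_sub, mul_one, one_mul, mul_one]
        abel
      rw [this]
      module
    rwa [e2] at h2
  -- decomposition P = (M - 1) + V⁻¹ * M
  have hVinv : V⁻¹ = S⁻¹ * S⁻¹ := by rw [← hSS, Matrix.mul_inv_rev]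
  have hPdecomp : P = (M - 1) + V⁻¹ * M := by
    rw [hP2]
    have hVA : V - A = S * S - A := by rw [hSS]
    rw [hVA]
    have e1 : S⁻¹ * (S * S - A) = S - S⁻¹ * A := by
      rw [mul_sub, ← mul_assoc, Matrix.nonsing_inv_mul _ hSdet, one_mul]
    have e2 : A * (A + 1)⁻¹ = 1 - (A + 1)⁻¹ := by
      have : (A + 1) * (A + 1)⁻¹ = 1 := Matrix.mul_nonsing_inv _ hA1det
      rw [add_mul, one_mul] at this
      linear_combination (norm := noncomm_ring) this
    have e3 : V⁻¹ * M = S⁻¹ * (A + 1)⁻¹ * S := by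
      rw [hVinv, hMdef]
      calc S⁻¹ * S⁻¹ * (S * (A + 1)⁻¹ * S)
          = S⁻¹ * (S⁻¹ * (S * ((A + 1)⁻¹ * S))) := by
            simp only [mul_assoc]
        _ = S⁻¹ * ((A + 1)⁻¹ * S) := by
            rw [Matrix.nonsing_inv_mul_cancel_left _ _ hSdet]
        _ = S⁻¹ * (A + 1)⁻¹ * S := by rw [mul_assoc]
    rw [e3]
    calc S⁻¹ * (S * S - A) * (A + 1)⁻¹ * S
        = (S - S⁻¹ * A) * (A + 1)⁻¹ * S := by rw [e1]
      _ = S * (A + 1)⁻¹ * S - S⁻¹ * (A * (A + 1)⁻¹) * S := by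
          rw [sub_mul, sub_mul, mul_assoc S⁻¹ A _]
      _ = M - S⁻¹ * (1 - (A + 1)⁻¹) * S := by rw [e2, hMdef]
      _ = M - (1 - S⁻¹ * (A + 1)⁻¹ * S) := by
          rw [mul_sub, sub_mul, mul_one, Matrix.nonsing_inv_mul _ hSdet]
      _ = (M - 1) + S⁻¹ * (A + 1)⁻¹ * S := by abel
  -- final estimate
  intro x
  have hMT : Mᵀ = M := herm_transpose hMpsd.1
  have hM1T : (M - 1)ᵀ = M - 1 := herm_transpose (hMpsd.1.sub Matrix.isHermitian_one)
  have hVT : (V⁻¹)ᵀ = V⁻¹ := herm_transpose hV.inv.posSemidef.1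
  have b1 : Real.sqrt (((M - 1) *ᵥ x) ⬝ᵥ ((M - 1) *ᵥ x)) ≤ 3 * Real.sqrt (x ⬝ᵥ x) := by
    refine quad_bound (by norm_num) ?_ x
    rwa [hM1T]
  have bM : Real.sqrt ((M *ᵥ x) ⬝ᵥ (M *ᵥ x)) ≤ 4 * Real.sqrt (x ⬝ᵥ x) := by
    refine quad_bound (by norm_num) ?_ x
    rwa [hMT]
  have bV : Real.sqrt ((V⁻¹ *ᵥ (M *ᵥ x)) ⬝ᵥ (V⁻¹ *ᵥ (M *ᵥ x)))
      ≤ 4⁻¹ * Real.sqrt ((M *ᵥ x) ⬝ᵥ (M *ᵥ x)) := by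
    refine quad_bound (by norm_num) ?_ (M *ᵥ x)
    rwa [hVT]
  have hx0 : 0 ≤ Real.sqrt (x ⬝ᵥ x) := Real.sqrt_nonneg _
  have hsplit : P *ᵥ x = (M - 1) *ᵥ x + V⁻¹ *ᵥ (M *ᵥ x) := by
    rw [hPdecomp, Matrix.add_mulVec, Matrix.mulVec_mulVec]
  rw [hsplit]
  calc Real.sqrt (((M - 1) *ᵥ x + V⁻¹ *ᵥ (M *ᵥ x)) ⬝ᵥ ((M - 1) *ᵥ x + V⁻¹ *ᵥ (M *ᵥ x)))
      ≤ Real.sqrt (((M - 1) *ᵥ x) ⬝ᵥ ((M - 1) *ᵥ x))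
        + Real.sqrt ((V⁻¹ *ᵥ (M *ᵥ x)) ⬝ᵥ (V⁻¹ *ᵥ (M *ᵥ x))) := tri _ _
    _ ≤ 3 * Real.sqrt (x ⬝ᵥ x) + 4⁻¹ * (4 * Real.sqrt (x ⬝ᵥ x)) := by
        refine add_le_add b1 (le_trans bV ?_)
        have : (0:ℝ) ≤ 4⁻¹ := by norm_num
        exact mul_le_mul_of_nonneg_left bM this
    _ ≤ 5 * Real.sqrt (x ⬝ᵥ x) := by nlinarith [hx0]
end

section
/- Let x_1, …, x_T ∈ ℝ^d with ‖x_t‖₂² ≤ c for all t where c ≥ 1, and define W_0 = c·I_d, W_t = W_{t−1} + x_t x_tᵀ. Then ∑_{t=1}^T x_tᵀ W_{t−1}^{-1} x_t ≤ 2 log( det(W_T) / det(c·I_d) ) ≤ 2d log(T·c/(c·d) + 1). -/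
open Matrix

private lemma log_lb {u : ℝ} (h0 : 0 ≤ u) (h1 : u ≤ 1) : u ≤ 2 * Real.log (1 + u) := by
  have hpos : (0:ℝ) < 1 + u := by linarith
  have h := Real.add_one_le_exp (-Real.log (1 + u))
  rw [Real.exp_neg, Real.exp_log hpos] at h
  have h2 : (1 + u)⁻¹ * (1 + u) = 1 := inv_mul_cancel₀ hpos.ne'
  nlinarith [mul_le_mul_of_nonneg_right h hpos.le]

private lemma det_step {d : ℕ} (M : Matrix (Fin d) (Fin d) ℝ) (hM : M.PosDef) (v : Fin d → ℝ) :
    (M + vecMulVec v v).det = M.det * (1 + v ⬝ᵥ (M⁻¹ *ᵥ v)) := by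
  rw [vecMulVec_eq Unit, det_add_replicateCol_mul_replicateRow hM.det_pos.ne'.isUnit v v]
  congr 1
  rw [Matrix.mul_assoc, ← replicateCol_mulVec, det_unique]
  simp [replicateRow_mul_replicateCol_apply]

/-- Elliptical potential lemma with regularization scale c:
∑ xₜᵀ W_{t-1}⁻¹ xₜ ≤ 2 log(det W_T / det(cI)) ≤ 2d log(Tc/(cd) + 1). -/
theorem stmt_16 (d T : ℕ) (c : ℝ) (hc : 1 ≤ c)
    (x : ℕ → (Fin d → ℝ)) (hx : ∀ t, x t ⬝ᵥ x t ≤ c)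
    (W : ℕ → Matrix (Fin d) (Fin d) ℝ)
    (hW0 : W 0 = c • (1 : Matrix (Fin d) (Fin d) ℝ))
    (hWrec : ∀ t : ℕ, W (t + 1) = W t + vecMulVec (x (t + 1)) (x (t + 1))) :
    ∑ t ∈ Finset.Icc 1 T, x t ⬝ᵥ ((W (t - 1))⁻¹ *ᵥ x t)
        ≤ 2 * Real.log ((W T).det / (c • (1 : Matrix (Fin d) (Fin d) ℝ)).det) ∧
    2 * Real.log ((W T).det / (c • (1 : Matrix (Fin d) (Fin d) ℝ)).det)
        ≤ 2 * d * Real.log ((T : ℝ) * c / (c * d) + 1) := by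
  have hc0 : (0:ℝ) < c := lt_of_lt_of_le one_pos hc
  have hpsd : ∀ v : Fin d → ℝ, (vecMulVec v v).PosSemidef := by
    intro v
    rw [vecMulVec_eq Unit]
    simpa [conjTranspose_replicateCol] using posSemidef_self_mul_conjTranspose (replicateCol Unit v)
  have hsum : ∀ t, W t = c • (1 : Matrix (Fin d) (Fin d) ℝ)
      + ∑ s ∈ Finset.Icc 1 t, vecMulVec (x s) (x s) := by
    intro t
    induction t with
    | zero => simp [hW0]
    | succ n ih =>
      rw [hWrec, ih, Finset.sum_Icc_succ_top (Nat.succ_le_succ n.zero_le), add_assoc]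
  have hS : ∀ t, (∑ s ∈ Finset.Icc 1 t, vecMulVec (x s) (x s)).PosSemidef := fun t =>
    Finset.sum_induction _ _ (fun a b ha hb => ha.add hb) .zero (fun s _ => hpsd (x s))
  have hcIpd : (c • (1 : Matrix (Fin d) (Fin d) ℝ)).PosDef := by
    rw [smul_one_eq_diagonal]
    exact posDef_diagonal_iff.mpr fun i => hc0
  have hpd : ∀ t, (W t).PosDef := fun t => by
    rw [hsum t]; exact hcIpd.add_posSemidef (hS t)
  have hlb : ∀ t (y : Fin d → ℝ), c * (y ⬝ᵥ y) ≤ y ⬝ᵥ (W t *ᵥ y) := by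
    intro t y
    rw [hsum t, add_mulVec, dotProduct_add, smul_mulVec, dotProduct_smul, one_mulVec,
      smul_eq_mul]
    have h := (hS t).dotProduct_mulVec_nonneg y
    rw [star_trivial] at h
    linarith
  have hu : ∀ t, 0 ≤ x (t+1) ⬝ᵥ ((W t)⁻¹ *ᵥ x (t+1))
      ∧ x (t+1) ⬝ᵥ ((W t)⁻¹ *ᵥ x (t+1)) ≤ 1 := by
    intro t
    set v := x (t+1) with hv
    set y := (W t)⁻¹ *ᵥ v with hy
    have hMy : (W t) *ᵥ y = v := by
      rw [hy, mulVec_mulVec, Matrix.mul_nonsing_inv _ (hpd t).det_pos.ne'.isUnit, one_mulVec]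
    have hnn : 0 ≤ v ⬝ᵥ y := by
      have h := ((hpd t).posSemidef.inv).dotProduct_mulVec_nonneg v
      rwa [star_trivial] at h
    have h1 : c * (y ⬝ᵥ y) ≤ v ⬝ᵥ y := by
      have h := hlb t y
      rw [hMy] at h
      rwa [dotProduct_comm y v] at h
    have hcs : (v ⬝ᵥ y) ^ 2 ≤ (v ⬝ᵥ v) * (y ⬝ᵥ y) := by
      simpa [dotProduct, sq] using Finset.sum_mul_sq_le_sq_mul_sq Finset.univ v y
    have hyy : 0 ≤ y ⬝ᵥ y := by
      simp only [dotProduct]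
      exact Finset.sum_nonneg fun i _ => mul_self_nonneg _
    have hvv : v ⬝ᵥ v ≤ c := hx (t+1)
    exact ⟨hnn, by nlinarith [hcs, h1, hvv, hnn, hyy]⟩
  have key : ∀ n : ℕ, ∑ t ∈ Finset.Icc 1 n, x t ⬝ᵥ ((W (t - 1))⁻¹ *ᵥ x t)
      ≤ 2 * (Real.log (W n).det - Real.log (W 0).det) := by
    intro n
    induction n with
    | zero => simp
    | succ n ih =>
      rw [Finset.sum_Icc_succ_top (Nat.succ_le_succ n.zero_le)]
      obtain ⟨h0, h1⟩ := hu n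
      have hdet : (W (n+1)).det = (W n).det * (1 + x (n+1) ⬝ᵥ ((W n)⁻¹ *ᵥ x (n+1))) := by
        rw [hWrec n]; exact det_step _ (hpd n) _
      have hlog : Real.log (W (n+1)).det
          = Real.log (W n).det + Real.log (1 + x (n+1) ⬝ᵥ ((W n)⁻¹ *ᵥ x (n+1))) := by
        rw [hdet, Real.log_mul (hpd n).det_pos.ne' (by linarith)]
      have hll := log_lb h0 h1
      simp only [Nat.add_sub_cancel]
      linarith
  constructor
  · have hkey := key T
    rw [hW0] at hkey
    rw [Real.log_div (hpd T).det_pos.ne' hcIpd.det_pos.ne']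
    linarith
  · -- second inequality
    rcases Nat.eq_zero_or_pos d with hd0 | hd
    · subst hd0
      simp [Matrix.det_isEmpty]
    · have hdR : (0:ℝ) < d := by exact_mod_cast hd
      have hH := (hpd T).isHermitian
      set lam := hH.eigenvalues with hlam
      have hlampos : ∀ i, 0 < lam i := (hpd T).eigenvalues_pos
      have hdetprod : (W T).det = ∏ i, lam i := by
        simpa using hH.det_eq_prod_eigenvalues
      have htrace : (W T).trace = ∑ i, lam i := by
        rw [hH.trace_eq_sum_eigenvalues]
        simp [hlam]
      have htr_le : (W T).trace ≤ c * d + T * c := by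
        rw [hsum T, trace_add, trace_smul, trace_one, trace_sum]
        have h1 : ∀ s ∈ Finset.Icc 1 T, (vecMulVec (x s) (x s)).trace ≤ c := by
          intro s _
          rw [vecMulVec_eq Unit, trace_replicateCol_mul_replicateRow]
          exact hx s
        calc c • (Fintype.card (Fin d) : ℝ) + ∑ s ∈ Finset.Icc 1 T, (vecMulVec (x s) (x s)).trace
            ≤ c • (Fintype.card (Fin d) : ℝ) + ∑ s ∈ Finset.Icc 1 T, c := by
              gcongr with s hs
              exact h1 s hs
          _ = c * d + T * c := by
              simp [Nat.card_Icc, smul_eq_mul, mul_comm]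
      have htrpos : 0 < (W T).trace := by
        rw [htrace]
        exact Finset.sum_pos (fun i _ => hlampos i) (by simp [Finset.univ_nonempty_iff]; exact Fin.pos_iff_nonempty.mp hd)
      have amgm : (W T).det ≤ ((W T).trace / d) ^ d := by
        have h := Real.geom_mean_le_arith_mean_weighted Finset.univ (fun _ => (d:ℝ)⁻¹) lam
          (fun i _ => by positivity)
          (by simp [Finset.card_univ]; field_simp)
          (fun i _ => (hlampos i).le)
        rw [Real.finset_prod_rpow _ _ (fun i _ => (hlampos i).le)] at h
        have hprodnn : 0 ≤ ∏ i, lam i := Finset.prod_nonneg fun i _ => (hlampos i).le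
        have h2 : ((∏ i, lam i) ^ ((d:ℝ)⁻¹)) ^ d ≤ ((W T).trace / d) ^ d := by
          apply pow_le_pow_left₀ (Real.rpow_nonneg hprodnn _)
          calc (∏ i, lam i) ^ ((d:ℝ)⁻¹) ≤ ∑ i, (d:ℝ)⁻¹ * lam i := h
            _ = (W T).trace / d := by
                rw [htrace, ← Finset.mul_sum]
                ring
        rw [Real.rpow_inv_natCast_pow hprodnn hd.ne'] at h2
        rw [hdetprod]
        exact h2
      have hdetsmul : (c • (1 : Matrix (Fin d) (Fin d) ℝ)).det = c ^ d := by
        simp [Matrix.det_smul]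
      have hq : (T:ℝ) * c / (c * d) + 1 = 1 + (T:ℝ)/d := by
        rw [mul_comm (T:ℝ) c, mul_div_mul_left _ _ hc0.ne']
        ring
      have hstep : (W T).det / c ^ d ≤ (1 + (T:ℝ)/d) ^ d := by
        have h3 : (W T).det ≤ ((c * d + T * c)/d) ^ d := by
          calc (W T).det ≤ ((W T).trace / d) ^ d := amgm
            _ ≤ ((c * d + T * c)/d) ^ d := by
                apply pow_le_pow_left₀ (div_nonneg htrpos.le hdR.le)
                gcongr
        have heq : ((c * (d:ℝ) + (T:ℝ) * c)/d) ^ d / c ^ d = (1 + (T:ℝ)/d) ^ d := by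
          rw [← div_pow]
          congr 1
          field_simp
        calc (W T).det / c ^ d ≤ ((c * d + T * c)/d) ^ d / c ^ d := by gcongr
          _ = (1 + (T:ℝ)/d) ^ d := heq
      rw [hdetsmul, hq]
      have hlogle : Real.log ((W T).det / c ^ d) ≤ d * Real.log (1 + (T:ℝ)/d) := by
        calc Real.log ((W T).det / c ^ d) ≤ Real.log ((1 + (T:ℝ)/d) ^ d) := by
              exact Real.log_le_log (div_pos (hpd T).det_pos (by positivity)) hstep
          _ = d * Real.log (1 + (T:ℝ)/d) := by rw [Real.log_pow]
      linarith
end
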